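/- For all positive integers n, S_n = 12^n · (∏_{i=0}^{n-1} (6i+1)(6i+5)) / (2·(2n+1)!), where S_n = C(6n,3n)·C(3n,n)/(2(2n+1)·C(2n,n)). -/

import Mathlib

lemma key_div (q r : ℕ) (hq : 2 ≤ q) (hr : r < q) :
    3*r/q + 2*r/q + (2*r+1)/q ≤ 6*r/q := by
  have hq0 : 0 < q := by omega
  set a := 3*r/q with ha
  set b := 2*r/q with hb
  set c := (2*r+1)/q with hc
  set k := 6*r/q with hk
  have haq : a * q ≤ 3*r := Nat.div_mul_le_self (3*r) q
  have haq2 : 3*r < (a+1) * q := (Nat.div_lt_iff_lt_mul hq0).mp (by omega)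
  have hbq : b * q ≤ 2*r := Nat.div_mul_le_self (2*r) q
  have hbq2 : 2*r < (b+1) * q := (Nat.div_lt_iff_lt_mul hq0).mp (by omega)
  have h1 : 2*a ≤ k := by
    rw [hk, Nat.le_div_iff_mul_le hq0]
    calc 2*a*q = 2*(a*q) := by ring
    _ ≤ 2*(3*r) := by omega
    _ = 6*r := by ring
  have h2 : k < 2*a+2 := by
    rw [hk, Nat.div_lt_iff_lt_mul hq0]
    calc 6*r = 2*(3*r) := by ring
    _ < 2*((a+1)*q) := by omega
    _ = (2*a+2)*q := by ring
  have h3 : 3*b ≤ k := by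
    rw [hk, Nat.le_div_iff_mul_le hq0]
    calc 3*b*q = 3*(b*q) := by ring
    _ ≤ 3*(2*r) := by omega
    _ = 6*r := by ring
  have h4 : k < 3*b+3 := by
    rw [hk, Nat.div_lt_iff_lt_mul hq0]
    calc 6*r = 3*(2*r) := by ring
    _ < 3*((b+1)*q) := by omega
    _ = (3*b+3)*q := by ring
  have h5 : c < 2 := by
    rw [hc, Nat.div_lt_iff_lt_mul hq0]; omega
  have h6 : k = 0 → c = 0 := by
    intro hk0
    have h6r : 6*r < q := by
      by_contra h
      have : 1 ≤ k := by rw [hk]; exact (Nat.one_le_div_iff hq0).mpr (by omega)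
      omega
    rw [hc]
    exact Nat.div_eq_of_lt (by omega)
  omega

lemma div_ineq (q n : ℕ) (hq : 2 ≤ q) :
    3*n/q + 2*n/q + (2*n+1)/q ≤ 6*n/q + n/q := by
  have hq0 : 0 < q := by omega
  obtain ⟨a, r, hr, rfl⟩ : ∃ a r, r < q ∧ n = q * a + r :=
    ⟨n / q, n % q, Nat.mod_lt _ hq0, (Nat.div_add_mod n q).symm⟩
  have e1 : 3*(q*a+r)/q = 3*r/q + 3*a := by
    rw [show 3*(q*a+r) = 3*r + 3*a*q by ring, Nat.add_mul_div_right _ _ hq0]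
  have e2 : 2*(q*a+r)/q = 2*r/q + 2*a := by
    rw [show 2*(q*a+r) = 2*r + 2*a*q by ring, Nat.add_mul_div_right _ _ hq0]
  have e3 : (2*(q*a+r)+1)/q = (2*r+1)/q + 2*a := by
    rw [show 2*(q*a+r)+1 = (2*r+1) + 2*a*q by ring, Nat.add_mul_div_right _ _ hq0]
  have e4 : 6*(q*a+r)/q = 6*r/q + 6*a := by
    rw [show 6*(q*a+r) = 6*r + 6*a*q by ring, Nat.add_mul_div_right _ _ hq0]
  have e5 : (q*a+r)/q = r/q + a := by
    rw [show q*a+r = r + a*q by ring, Nat.add_mul_div_right _ _ hq0]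
  have e0 : r/q = 0 := Nat.div_eq_of_lt hr
  have := key_div q r hq hr
  omega


open Nat Finset

lemma fact_dvd (n : ℕ) (hn : 0 < n) :
    2 * (Nat.factorial (2*n+1) * (Nat.factorial (2*n) * Nat.factorial (3*n))) ∣
      Nat.factorial (6*n) * Nat.factorial n := by
  have hA : 2 * (Nat.factorial (2*n+1) * (Nat.factorial (2*n) * Nat.factorial (3*n))) ≠ 0 :=
    by positivity
  have hB : Nat.factorial (6*n) * Nat.factorial n ≠ 0 := by positivity
  rw [← Nat.factorization_le_iff_dvd hA hB, Finsupp.le_def]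
  intro p
  by_cases hp : p.Prime
  · haveI := Fact.mk hp
    have hp2 : 2 ≤ p := hp.two_le
    have hfac : ∀ m : ℕ, m ≤ 6*n →
        (Nat.factorial m).factorization p = ∑ i ∈ Finset.Ico 1 (6*n+1), m / p ^ i := by
      intro m hm
      rw [Nat.factorization_def _ hp, padicValNat_factorial (b := 6*n+1)
        (lt_of_le_of_lt (Nat.log_le_self p m) (by omega))]
    have hmulA : (2 * (Nat.factorial (2*n+1) * (Nat.factorial (2*n) * Nat.factorial (3*n)))).factorization p
        = (2:ℕ).factorization p + ((Nat.factorial (2*n+1)).factorization p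
          + ((Nat.factorial (2*n)).factorization p + (Nat.factorial (3*n)).factorization p)) := by
      rw [Nat.factorization_mul (by norm_num) (by positivity),
        Nat.factorization_mul (by positivity) (by positivity),
        Nat.factorization_mul (by positivity) (by positivity)]
      simp
    have hmulB : (Nat.factorial (6*n) * Nat.factorial n).factorization p
        = (Nat.factorial (6*n)).factorization p + (Nat.factorial n).factorization p := by
      rw [Nat.factorization_mul (by positivity) (by positivity)]; simp
    rw [hmulA, hmulB, hfac _ (by omega), hfac _ (by omega), hfac _ (by omega),
      hfac _ (le_refl _), hfac _ (by omega)]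
    have hq : ∀ i ∈ Finset.Ico 1 (6*n+1), 2 ≤ p ^ i := by
      intro i hi
      simp only [Finset.mem_Ico] at hi
      calc 2 ≤ p := hp2
      _ = p ^ 1 := (pow_one p).symm
      _ ≤ p ^ i := Nat.pow_le_pow_right (by omega) hi.1
    have hpoint : ∀ i ∈ Finset.Ico 1 (6*n+1),
        (2*n+1) / p ^ i + ((2*n) / p ^ i + (3*n) / p ^ i) ≤ 6*n / p ^ i + n / p ^ i := by
      intro i hi
      have := div_ineq (p ^ i) n (hq i hi)
      omega
    rcases eq_or_ne p 2 with rfl | hne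
    · -- need 1 + sums ≤ sums : strict inequality at i0
      have h2fac : (2:ℕ).factorization 2 = 1 := by
        rw [Nat.Prime.factorization Nat.prime_two]; simp
      rw [h2fac]
      have h3n : 3*n ≠ 0 := by omega
      set i0 := Nat.log 2 (3*n) + 1 with hi0
      have hmem : i0 ∈ Finset.Ico 1 (6*n+1) := by
        simp only [Finset.mem_Ico]
        have := Nat.log_lt_self 2 h3n
        omega
      have hq3 : 3*n < 2 ^ i0 := Nat.lt_pow_succ_log_self (by norm_num) (3*n)
      have hq6 : 2 ^ i0 ≤ 6*n := by
        rw [hi0, pow_succ, mul_comm]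
        have := Nat.pow_log_le_self 2 h3n
        omega
      have hstrict : Finset.sum (Finset.Ico 1 (6*n+1))
            (fun i => (2*n+1) / 2 ^ i + ((2*n) / 2 ^ i + (3*n) / 2 ^ i))
          < Finset.sum (Finset.Ico 1 (6*n+1)) (fun i => 6*n / 2 ^ i + n / 2 ^ i) := by
        apply Finset.sum_lt_sum hpoint
        refine ⟨i0, hmem, ?_⟩
        have e1 : (2*n+1) / 2 ^ i0 = 0 := Nat.div_eq_of_lt (by omega)
        have e2 : (2*n) / 2 ^ i0 = 0 := Nat.div_eq_of_lt (by omega)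
        have e3 : (3*n) / 2 ^ i0 = 0 := Nat.div_eq_of_lt (by omega)
        have e4 : 1 ≤ 6*n / 2 ^ i0 := (Nat.one_le_div_iff (by positivity)).mpr hq6
        rw [e1, e2, e3]
        simpa using lt_of_lt_of_le e4 (Nat.le_add_right _ (n / 2 ^ i0))
      have hsums := Finset.sum_add_distrib (s := Finset.Ico 1 (6*n+1))
        (f := fun i => (2*n+1) / 2 ^ i) (g := fun i => (2*n) / 2 ^ i + (3*n) / 2 ^ i)
      -- combine
      calc 1 + (∑ i ∈ Finset.Ico 1 (6*n+1), (2*n+1) / 2 ^ i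
            + (∑ i ∈ Finset.Ico 1 (6*n+1), (2*n) / 2 ^ i
              + ∑ i ∈ Finset.Ico 1 (6*n+1), (3*n) / 2 ^ i))
          = 1 + ∑ i ∈ Finset.Ico 1 (6*n+1), ((2*n+1) / 2 ^ i + ((2*n) / 2 ^ i + (3*n) / 2 ^ i)) := by
            rw [Finset.sum_add_distrib, Finset.sum_add_distrib]
      _ ≤ ∑ i ∈ Finset.Ico 1 (6*n+1), (6*n / 2 ^ i + n / 2 ^ i) := by omega
      _ = ∑ i ∈ Finset.Ico 1 (6*n+1), 6*n / 2 ^ i + ∑ i ∈ Finset.Ico 1 (6*n+1), n / 2 ^ i := by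
            rw [Finset.sum_add_distrib]
    · have h2fac : (2:ℕ).factorization p = 0 := by
        rw [Nat.Prime.factorization Nat.prime_two, Finsupp.single_apply]
        simp [Ne.symm hne]
      rw [h2fac, zero_add]
      calc ∑ i ∈ Finset.Ico 1 (6*n+1), (2*n+1) / p ^ i
            + (∑ i ∈ Finset.Ico 1 (6*n+1), (2*n) / p ^ i
              + ∑ i ∈ Finset.Ico 1 (6*n+1), (3*n) / p ^ i)
          = ∑ i ∈ Finset.Ico 1 (6*n+1), ((2*n+1) / p ^ i + ((2*n) / p ^ i + (3*n) / p ^ i)) := by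
            rw [Finset.sum_add_distrib, Finset.sum_add_distrib]
      _ ≤ ∑ i ∈ Finset.Ico 1 (6*n+1), (6*n / p ^ i + n / p ^ i) := Finset.sum_le_sum hpoint
      _ = ∑ i ∈ Finset.Ico 1 (6*n+1), 6*n / p ^ i + ∑ i ∈ Finset.Ico 1 (6*n+1), n / p ^ i := by
            rw [Finset.sum_add_distrib]
  · simp [Nat.factorization_eq_zero_of_not_prime _ hp]


lemma fact6 (m : ℕ) : Nat.factorial (m+6)
    = (m+6)*((m+5)*((m+4)*((m+3)*((m+2)*((m+1)*Nat.factorial m))))) := by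
  show Nat.factorial (m+5+1) = _
  rw [Nat.factorial_succ]
  show (m+5+1) * Nat.factorial (m+4+1) = _
  rw [Nat.factorial_succ]
  show _ * ((m+4+1) * Nat.factorial (m+3+1)) = _
  rw [Nat.factorial_succ]
  show _ * (_ * ((m+3+1) * Nat.factorial (m+2+1))) = _
  rw [Nat.factorial_succ]
  show _ * (_ * (_ * ((m+2+1) * Nat.factorial (m+1+1)))) = _
  rw [Nat.factorial_succ]
  rw [Nat.factorial_succ]

lemma fact_prod (n : ℕ) :
    Nat.factorial (6*n) * Nat.factorial n
      = 12^n * (∏ i ∈ Finset.range n, ((6*i+1)*(6*i+5))) *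
        (Nat.factorial (2*n) * Nat.factorial (3*n)) := by
  induction n with
  | zero => simp
  | succ n ih =>
    have e6 : 6*(n+1) = 6*n+6 := by ring
    have e2 : 2*(n+1) = 2*n+1+1 := by ring
    have e3 : 3*(n+1) = 3*n+1+1+1 := by ring
    calc Nat.factorial (6*(n+1)) * Nat.factorial (n+1)
        = ((6*n+6)*(6*n+5)*(6*n+4)*(6*n+3)*(6*n+2)*(6*n+1)*(n+1))
            * (Nat.factorial (6*n) * Nat.factorial n) := by
          rw [e6, fact6, Nat.factorial_succ]; ring
      _ = ((6*n+6)*(6*n+5)*(6*n+4)*(6*n+3)*(6*n+2)*(6*n+1)*(n+1))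
            * (12^n * (∏ i ∈ Finset.range n, ((6*i+1)*(6*i+5))) *
              (Nat.factorial (2*n) * Nat.factorial (3*n))) := by rw [ih]
      _ = 12^(n+1) * (∏ i ∈ Finset.range (n+1), ((6*i+1)*(6*i+5))) *
            (Nat.factorial (2*(n+1)) * Nat.factorial (3*(n+1))) := by
          rw [Finset.prod_range_succ, e2, e3, Nat.factorial_succ, Nat.factorial_succ,
            Nat.factorial_succ, Nat.factorial_succ, Nat.factorial_succ]
          ring


def S (n : ℕ) : ℕ :=
  Nat.choose (6 * n) (3 * n) * Nat.choose (3 * n) n / (2 * (2 * n + 1) * Nat.choose (2 * n) n)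

theorem S_product_formula (n : ℕ) (hn : 0 < n) :
    (S n : ℚ) = 12 ^ n * (∏ i ∈ Finset.range n, ((6 * i + 1) * (6 * i + 5) : ℚ))
      / (2 * (Nat.factorial (2 * n + 1) : ℚ)) := by
  set P : ℕ := ∏ i ∈ Finset.range n, ((6*i+1)*(6*i+5)) with hP
  -- divisibility: 2 * (2n+1)! ∣ 12^n * P
  have hdvd : 2 * Nat.factorial (2*n+1) ∣ 12^n * P := by
    have h1 := fact_dvd n hn
    rw [fact_prod n, ← hP] at h1
    exact (Nat.mul_dvd_mul_iff_right
      (show 0 < Nat.factorial (2*n) * Nat.factorial (3*n) by positivity)).mp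
      (by rw [mul_assoc]; exact h1)
  obtain ⟨q, hq⟩ := hdvd
  -- S n = q
  have c1 : Nat.choose (6*n) (3*n) * Nat.factorial (3*n) * Nat.factorial (3*n)
      = Nat.factorial (6*n) := by
    have := Nat.choose_mul_factorial_mul_factorial (show 3*n ≤ 6*n by omega)
    rwa [show 6*n - 3*n = 3*n by omega] at this
  have c2 : Nat.choose (3*n) n * Nat.factorial n * Nat.factorial (2*n)
      = Nat.factorial (3*n) := by
    have := Nat.choose_mul_factorial_mul_factorial (show n ≤ 3*n by omega)
    rwa [show 3*n - n = 2*n by omega] at this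
  have c3 : Nat.choose (2*n) n * Nat.factorial n * Nat.factorial n
      = Nat.factorial (2*n) := by
    have := Nat.choose_mul_factorial_mul_factorial (show n ≤ 2*n by omega)
    rwa [show 2*n - n = n by omega] at this
  have hN : Nat.choose (6*n) (3*n) * Nat.choose (3*n) n
      = q * (2 * (2*n+1) * Nat.choose (2*n) n) := by
    have hMpos : 0 < Nat.factorial (3*n) * (Nat.factorial n * Nat.factorial (2*n))
        * (Nat.factorial n * Nat.factorial n) := by positivity
    apply Nat.eq_of_mul_eq_mul_right hMpos
    calc Nat.choose (6*n) (3*n) * Nat.choose (3*n) n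
          * (Nat.factorial (3*n) * (Nat.factorial n * Nat.factorial (2*n))
            * (Nat.factorial n * Nat.factorial n))
        = (Nat.choose (6*n) (3*n) * Nat.factorial (3*n)
            * (Nat.choose (3*n) n * Nat.factorial n * Nat.factorial (2*n)))
            * (Nat.factorial n * Nat.factorial n) := by ring
      _ = Nat.factorial (6*n) * Nat.factorial n * Nat.factorial n := by rw [c2, c1]; ring
      _ = (12^n * P) * (Nat.factorial (2*n) * Nat.factorial (3*n)) * Nat.factorial n := by
          rw [← fact_prod n]
      _ = (q * (2 * Nat.factorial (2*n+1))) * (Nat.factorial (2*n) * Nat.factorial (3*n))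
            * Nat.factorial n := by rw [hq]; ring
      _ = q * (2 * (2*n+1) * (Nat.choose (2*n) n * Nat.factorial n * Nat.factorial n))
            * (Nat.factorial (2*n) * Nat.factorial (3*n)) * Nat.factorial n := by
          rw [c3, show 2*n+1 = (2*n)+1 from rfl, Nat.factorial_succ]; ring
      _ = q * (2 * (2*n+1) * Nat.choose (2*n) n)
            * (Nat.factorial (3*n) * (Nat.factorial n * Nat.factorial (2*n))
              * (Nat.factorial n * Nat.factorial n)) := by ring
  have hSq : S n = q := by
    unfold S
    rw [hN]
    exact Nat.mul_div_cancel q (Nat.mul_pos (by omega) (Nat.choose_pos (by omega)))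
  rw [hSq]
  have hfne : ((2:ℚ) * (Nat.factorial (2*n+1) : ℚ)) ≠ 0 := by positivity
  rw [eq_div_iff hfne]
  have hq' : (12:ℚ)^n * (P:ℚ) = 2 * (Nat.factorial (2*n+1) : ℚ) * q := by
    exact_mod_cast congrArg (Nat.cast : ℕ → ℚ) hq
  rw [hP] at hq'
  push_cast at hq' ⊢
  linarith [hq']
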